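/- Let p ≥ 3 be a prime and k, n, a integers with 1 ≤ k ≤ n. Define T_p(n,k,a) as the sum over all tuples (x₁,…,xₙ) with each xᵢ ∈ {1,…,p-1} and x₁+⋯+xₙ ≡ a (mod p) of ((x₁⋯x_k)/p). Then: if k is odd and p∤a, T_p(n,k,a) = (-1)^{n-k}·(a/p)·p^{(k-1)/2}·((-1/p))^{(k-1)/2}; if k is odd and p|a, T_p(n,k,a) = 0; if k is even and p∤a, T_p(n,k,a) = (-1)^{n+1-k}·((-1/p))^{k/2}·p^{(k-2)/2}; if k is even and p|a, T_p(n,k,a) = (-1)^{n-k}·(p-1)·((-1/p))^{k/2}·p^{(k-2)/2}. -/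

import Mathlib

/-- `Tsum p n k a` is the sum over all tuples `(x₁,…,xₙ)` of nonzero residues mod `p`
with `x₁+⋯+xₙ ≡ a (mod p)` of the Legendre symbol `((x₁⋯x_k)/p)`. -/
def Tsum (p : ℕ) [Fact p.Prime] (n k : ℕ) (a : ℤ) : ℤ :=
  ∑ x ∈ Finset.univ.filter
      (fun x : Fin n → ZMod p => (∀ i, x i ≠ 0) ∧ ∑ i, x i = (a : ZMod p)),
    quadraticChar (ZMod p) (∏ i ∈ Finset.univ.filter (fun i : Fin n => (i : ℕ) < k), x i)

open Finset

namespace TsumAux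

variable (p : ℕ) [Fact p.Prime]

/-- The "complete" sum: no nonzero condition, product over all coordinates. -/
def S (k : ℕ) (a : ZMod p) : ℤ :=
  ∑ x ∈ Finset.univ.filter (fun x : Fin k → ZMod p => ∑ i, x i = a),
    quadraticChar (ZMod p) (∏ i, x i)

lemma S_zero (a : ZMod p) : S p 0 a = if a = 0 then 1 else 0 := by
  rw [S]
  by_cases h : a = 0 <;> simp [h, eq_comm]

lemma S_succ (k : ℕ) (a : ZMod p) :
    S p (k + 1) a = ∑ t : ZMod p, (quadraticChar (ZMod p) t : ℤ) * S p k (a - t) := by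
  simp only [S, Finset.sum_filter, Finset.mul_sum, mul_ite, mul_zero]
  refine Eq.trans ?_ (Fintype.sum_prod_type (f := fun q : ZMod p × (Fin k → ZMod p) =>
    if ∑ i, q.2 i = a - q.1 then
      (quadraticChar (ZMod p) q.1 : ℤ) * quadraticChar (ZMod p) (∏ i, q.2 i) else 0))
  refine (Fintype.sum_equiv (Fin.snocEquiv (fun _ => ZMod p)) _ _ fun q => ?_).symm
  obtain ⟨t, x⟩ := q
  simp only [Fin.snocEquiv_apply, Fin.sum_univ_castSucc, Fin.prod_univ_castSucc,
    Fin.snoc_castSucc, Fin.snoc_last]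
  by_cases h : ∑ i, x i = a - t
  · rw [if_pos h, if_pos (by rw [h]; ring), map_mul, mul_comm]
  · rw [if_neg h, if_neg (fun hh => h (by rw [← hh]; ring))]

lemma char2 (hp : 3 ≤ p) : ringChar (ZMod p) ≠ 2 := by
  rw [ZMod.ringChar_zmod_n]; omega

/-- The auxiliary bijection `s ↦ s⁻¹ - 1` of `ZMod p`. -/
def invSub : ZMod p ≃ ZMod p where
  toFun s := s⁻¹ - 1
  invFun u := (u + 1)⁻¹
  left_inv s := by simp
  right_inv u := by simp

lemma JS1 (hp : 3 ≤ p) :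
    ∑ s : ZMod p, (quadraticChar (ZMod p) s * quadraticChar (ZMod p) (1 - s) : ℤ) =
      - quadraticChar (ZMod p) (-1) := by
  set e := invSub p with he
  have hsymm : ∀ u : ZMod p, (e.symm u = 0) ↔ u = -1 := by
    intro u
    show (u + 1)⁻¹ = 0 ↔ _
    rw [inv_eq_zero]
    constructor
    · intro h; linear_combination h
    · intro h; rw [h]; ring
  have key : ∀ s : ZMod p, (quadraticChar (ZMod p) s * quadraticChar (ZMod p) (1 - s) : ℤ) =
      if e.symm (e s) = 0 then 0 else quadraticChar (ZMod p) (e s) := by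
    intro s
    rw [e.symm_apply_apply]
    by_cases hs : s = 0
    · simp [hs]
    · rw [if_neg hs]
      show _ = (quadraticChar (ZMod p) (s⁻¹ - 1) : ℤ)
      have h1 : s⁻¹ - 1 = s⁻¹ * (1 - s) := by field_simp
      have h2 : (s : ZMod p)⁻¹ = s * (s⁻¹)^2 := by field_simp
      rw [h1, map_mul, h2, map_mul, quadraticChar_sq_one' (inv_ne_zero hs), mul_one]
  simp_rw [key]
  rw [Equiv.sum_comp e (fun u => if e.symm u = 0 then 0 else (quadraticChar (ZMod p) u : ℤ))]
  have step : ∀ u : ZMod p, (if e.symm u = 0 then 0 else (quadraticChar (ZMod p) u : ℤ)) =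
      quadraticChar (ZMod p) u - (if u = -1 then quadraticChar (ZMod p) u else 0) := by
    intro u
    by_cases h : u = -1
    · rw [if_pos ((hsymm u).mpr h), if_pos h, sub_self]
    · rw [if_neg (fun hh => h ((hsymm u).mp hh)), if_neg h, sub_zero]
  simp_rw [step]
  rw [Finset.sum_sub_distrib, quadraticChar_sum_zero (char2 p hp),
    Finset.sum_ite_eq' univ (-1 : ZMod p) (fun u => (quadraticChar (ZMod p) u : ℤ))]
  simp

lemma JS (hp : 3 ≤ p) (a : ZMod p) :
    ∑ t : ZMod p, (quadraticChar (ZMod p) t * quadraticChar (ZMod p) (a - t) : ℤ) =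
      (if a = 0 then (p : ℤ) - 1 else -1) * quadraticChar (ZMod p) (-1) := by
  by_cases ha : a = 0
  · rw [if_pos ha, ha]
    have key : ∀ t : ZMod p, (quadraticChar (ZMod p) t * quadraticChar (ZMod p) (0 - t) : ℤ) =
        (quadraticChar (ZMod p) (-1) : ℤ) * (1 - if t = 0 then 1 else 0) := by
      intro t
      by_cases ht : t = 0
      · simp [ht]
      · rw [if_neg ht, sub_zero, mul_one, show (0 : ZMod p) - t = -1 * t by ring, map_mul]
        have h2 := quadraticChar_sq_one (F := ZMod p) ht
        linear_combination (quadraticChar (ZMod p) (-1) : ℤ) * h2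
    simp_rw [key]
    rw [← Finset.mul_sum, Finset.sum_sub_distrib,
      Finset.sum_ite_eq' univ (0 : ZMod p) (fun _ => (1 : ℤ))]
    simp [ZMod.card, mul_comm]
  · rw [if_neg ha]
    rw [← Equiv.sum_comp (Equiv.mulLeft₀ a ha)
      (fun t => (quadraticChar (ZMod p) t * quadraticChar (ZMod p) (a - t) : ℤ))]
    have key : ∀ s : ZMod p,
        (quadraticChar (ZMod p) ((Equiv.mulLeft₀ a ha) s) *
          quadraticChar (ZMod p) (a - (Equiv.mulLeft₀ a ha) s) : ℤ) =
        quadraticChar (ZMod p) s * quadraticChar (ZMod p) (1 - s) := by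
      intro s
      show (quadraticChar (ZMod p) (a * s) * quadraticChar (ZMod p) (a - a * s) : ℤ) = _
      rw [show a - a * s = a * (1 - s) by ring, map_mul, map_mul]
      have h2 := quadraticChar_sq_one (F := ZMod p) ha
      linear_combination (quadraticChar (ZMod p) s * quadraticChar (ZMod p) (1 - s) : ℤ) * h2
    simp_rw [key]
    rw [JS1 p hp]
    ring

local notation "χ" => fun a => (quadraticChar (ZMod p) a : ℤ)

lemma S_one (a : ZMod p) : S p 1 a = χ a := by
  rw [show (1 : ℕ) = 0 + 1 from rfl, S_succ]
  have key : ∀ t : ZMod p, (χ t) * S p 0 (a - t) = if t = a then χ t else 0 := by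
    intro t
    rw [S_zero]
    by_cases h : t = a
    · rw [if_pos h, if_pos (by rw [h]; ring), mul_one]
    · rw [if_neg h, if_neg (fun hh => h (by linear_combination -hh)), mul_zero]
  simp_rw [key]
  rw [Finset.sum_ite_eq' univ a (fun t => χ t)]
  simp

lemma S_formula (hp : 3 ≤ p) (m : ℕ) :
    (∀ a : ZMod p, S p (2 * m + 1) a = χ a * ((χ (-1)) * p) ^ m) ∧
    (∀ a : ZMod p, S p (2 * m + 2) a =
      (if a = 0 then (p : ℤ) - 1 else -1) * χ (-1) * ((χ (-1)) * p) ^ m) := by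
  induction m with
  | zero =>
    constructor
    · intro a; rw [pow_zero, mul_one]; exact S_one p a
    · intro a
      rw [pow_zero, mul_one, show (2 : ℕ) * 0 + 2 = 1 + 1 by ring, S_succ]
      simp_rw [S_one]
      exact JS p hp a
  | succ m ih =>
    obtain ⟨ih1, ih2⟩ := ih
    have hodd : ∀ a : ZMod p, S p (2 * (m + 1) + 1) a = χ a * ((χ (-1)) * p) ^ (m + 1) := by
      intro a
      rw [show 2 * (m + 1) + 1 = (2 * m + 2) + 1 by ring, S_succ]
      have key : ∀ t : ZMod p, (χ t) * S p (2 * m + 2) (a - t) =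
          ((χ (-1)) * ((χ (-1)) * p) ^ m) *
            ((χ t) * (-1) + (if t = a then (χ t) * p else 0)) := by
        intro t
        rw [ih2]
        by_cases h : t = a
        · rw [if_pos h, if_pos (by rw [h]; ring)]; ring
        · rw [if_neg (fun hh => h (by linear_combination -hh)), if_neg h]; ring
      simp_rw [key]
      rw [← Finset.mul_sum, Finset.sum_add_distrib, ← Finset.sum_mul,
        quadraticChar_sum_zero (char2 p hp),
        Finset.sum_ite_eq' univ a (fun t => (χ t) * p)]
      simp only [mem_univ, if_true, zero_mul, zero_add]
      ring
    refine ⟨hodd, fun a => ?_⟩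
    rw [show 2 * (m + 1) + 2 = (2 * (m + 1) + 1) + 1 by ring, S_succ]
    simp_rw [hodd]
    rw [show (∑ t : ZMod p, (χ t) * ((χ (a - t)) * ((χ (-1)) * p) ^ (m + 1))) =
      (∑ t : ZMod p, (χ t) * (χ (a - t))) * ((χ (-1)) * p) ^ (m + 1) from by
        rw [Finset.sum_mul]; exact Finset.sum_congr rfl fun t _ => by ring,
      JS p hp a]

lemma sum_S_eq_zero (hp : 3 ≤ p) (k : ℕ) (hk : 1 ≤ k) (a : ZMod p) :
    ∑ t : ZMod p, S p k (a - t) = 0 := by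
  have h1 : (∑ t : ZMod p, S p k (a - t)) = ∑ b : ZMod p, S p k b :=
    Equiv.sum_comp (Equiv.subLeft a) (fun b => S p k b)
  rw [h1]
  obtain ⟨j, rfl⟩ : ∃ j, k = j + 1 := ⟨k - 1, by omega⟩
  simp_rw [S_succ]
  rw [Finset.sum_comm]
  have h2 : ∀ t : ZMod p, (∑ b : ZMod p, (χ t) * S p j (b - t)) =
      (χ t) * ∑ c : ZMod p, S p j c := by
    intro t
    rw [← Finset.mul_sum]
    congr 1
    exact Equiv.sum_comp (Equiv.subRight t) (fun c => S p j c)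
  simp_rw [h2]
  rw [← Finset.sum_mul, quadraticChar_sum_zero (char2 p hp), zero_mul]

/-- The main sum, with the argument in `ZMod p`. -/
def T (n k : ℕ) (a : ZMod p) : ℤ :=
  ∑ x ∈ Finset.univ.filter
      (fun x : Fin n → ZMod p => (∀ i, x i ≠ 0) ∧ ∑ i, x i = a),
    quadraticChar (ZMod p) (∏ i ∈ Finset.univ.filter (fun i : Fin n => (i : ℕ) < k), x i)

lemma T_eq_S (k : ℕ) (a : ZMod p) : T p k k a = S p k a := by
  rw [T, S]
  have hfilt : (Finset.univ.filter (fun i : Fin k => (i : ℕ) < k)) = Finset.univ := by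
    apply Finset.filter_true_of_mem; intro i _; exact i.isLt
  simp_rw [hfilt]
  apply Finset.sum_subset
  · intro x hx
    simp only [Finset.mem_filter, Finset.mem_univ, true_and] at hx ⊢
    exact hx.2
  · intro x hx hnx
    simp only [Finset.mem_filter, Finset.mem_univ, true_and, not_and] at hx hnx
    have hex : ∃ i, x i = 0 := by
      by_contra h
      push_neg at h
      exact (hnx h) hx
    obtain ⟨i, hi⟩ := hex
    rw [Finset.prod_eq_zero (Finset.mem_univ i) hi]
    simp

lemma T_succ (n k : ℕ) (hkn : k ≤ n) (a : ZMod p) :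
    T p (n + 1) k a = ∑ t : ZMod p, (if t = 0 then 0 else T p n k (a - t)) := by
  simp only [T, Finset.sum_filter]
  have push : ∀ t : ZMod p, (if t = 0 then (0:ℤ) else ∑ x : Fin n → ZMod p,
        if (∀ i, x i ≠ 0) ∧ ∑ i, x i = a - t then
          (quadraticChar (ZMod p) (∏ i ∈ univ.filter (fun i : Fin n => (i:ℕ) < k), x i) : ℤ)
        else 0) =
      ∑ x : Fin n → ZMod p, (if t = 0 then (0:ℤ) else
        if (∀ i, x i ≠ 0) ∧ ∑ i, x i = a - t then
          (quadraticChar (ZMod p) (∏ i ∈ univ.filter (fun i : Fin n => (i:ℕ) < k), x i) : ℤ)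
        else 0) := by
    intro t; split <;> simp
  simp_rw [push]
  refine Eq.trans ?_ (Fintype.sum_prod_type (f := fun q : ZMod p × (Fin n → ZMod p) =>
    if q.1 = 0 then (0:ℤ) else
      if (∀ i, q.2 i ≠ 0) ∧ ∑ i, q.2 i = a - q.1 then
        (quadraticChar (ZMod p) (∏ i ∈ univ.filter (fun i : Fin n => (i:ℕ) < k), q.2 i) : ℤ)
      else 0))
  refine (Fintype.sum_equiv (Fin.snocEquiv (fun _ => ZMod p)) _ _ fun q => ?_).symm
  obtain ⟨t, x⟩ := q
  simp only [Fin.snocEquiv_apply]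
  have hsum : (∑ i : Fin (n+1), Fin.snoc x t i) = (∑ i, x i) + t := by
    rw [Fin.sum_univ_castSucc]
    simp [Fin.snoc_castSucc, Fin.snoc_last]
  have hprod : (∏ i ∈ univ.filter (fun i : Fin (n+1) => (i:ℕ) < k), Fin.snoc x t i) =
      ∏ i ∈ univ.filter (fun i : Fin n => (i:ℕ) < k), x i := by
    rw [Finset.prod_filter, Finset.prod_filter, Fin.prod_univ_castSucc]
    have h1 : ∀ i : Fin n, (if ((i.castSucc : Fin (n+1)) : ℕ) < k
        then (Fin.snoc x t : Fin (n+1) → ZMod p) i.castSucc else 1)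
        = (if (i:ℕ) < k then x i else 1) := by
      intro i
      rw [Fin.snoc_castSucc, Fin.coe_castSucc]
    rw [Finset.prod_congr rfl (fun i _ => h1 i),
      if_neg (by simp [Fin.val_last]; omega), mul_one]
  have hall : (∀ i : Fin (n+1), (Fin.snoc x t : Fin (n+1) → ZMod p) i ≠ 0) ↔
      (∀ i, x i ≠ 0) ∧ t ≠ 0 := by
    constructor
    · intro h
      refine ⟨fun i => ?_, ?_⟩
      · simpa [Fin.snoc_castSucc] using h i.castSucc
      · simpa [Fin.snoc_last] using h (Fin.last n)
    · rintro ⟨h1, h2⟩ i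
      refine Fin.lastCases ?_ (fun j => ?_) i
      · simpa [Fin.snoc_last] using h2
      · simpa [Fin.snoc_castSucc] using h1 j
  by_cases ht : t = 0
  · rw [if_pos ht, if_neg (fun h => (hall.mp h.1).2 ht)]
  · rw [if_neg ht]
    have hiff : ((∀ i : Fin (n+1), (Fin.snoc x t : Fin (n+1) → ZMod p) i ≠ 0) ∧
        (∑ i, (Fin.snoc x t : Fin (n+1) → ZMod p) i) = a) ↔
        ((∀ i, x i ≠ 0) ∧ ∑ i, x i = a - t) := by
      rw [hall, hsum]
      constructor
      · rintro ⟨⟨h1, h2⟩, h3⟩; exact ⟨h1, by linear_combination h3⟩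
      · rintro ⟨h1, h3⟩; exact ⟨⟨h1, ht⟩, by linear_combination h3⟩
    by_cases hc : (∀ i, x i ≠ 0) ∧ ∑ i, x i = a - t
    · rw [if_pos hc, if_pos (hiff.mpr hc), hprod]
    · rw [if_neg hc, if_neg (fun h => hc (hiff.mp h))]

lemma T_formula (hp : 3 ≤ p) (k : ℕ) (hk : 1 ≤ k) (n : ℕ) (hkn : k ≤ n) (a : ZMod p) :
    T p n k a = (-1) ^ (n - k) * S p k a := by
  induction n, hkn using Nat.le_induction generalizing a with
  | base => rw [T_eq_S, Nat.sub_self, pow_zero, one_mul]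
  | succ n hn ih =>
    rw [T_succ p n k hn a]
    have key : ∀ t : ZMod p, (if t = 0 then (0:ℤ) else T p n k (a - t)) =
        (-1)^(n-k) * (S p k (a - t) - if t = 0 then S p k (a - t) else 0) := by
      intro t
      by_cases h : t = 0
      · rw [if_pos h, if_pos h, sub_self, mul_zero]
      · rw [if_neg h, if_neg h, sub_zero, ih (a - t)]
    simp_rw [key]
    rw [← Finset.mul_sum, Finset.sum_sub_distrib, sum_S_eq_zero p hp k hk a,
      Finset.sum_ite_eq' univ (0 : ZMod p) (fun t => S p k (a - t))]
    simp only [mem_univ, if_true, zero_sub, sub_zero]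
    rw [show n + 1 - k = (n - k) + 1 from by omega, pow_succ]
    ring

end TsumAux

/-- the full evaluation of `T_p(n,k,a)` in the four cases according to the
parity of `k` and whether `p ∣ a`. -/
theorem Tsum_eval (p : ℕ) [Fact p.Prime] (hp : 3 ≤ p) (n k : ℕ)
    (hk : 1 ≤ k) (hkn : k ≤ n) (a : ℤ) :
    (Odd k → ¬ (p : ℤ) ∣ a →
      Tsum p n k a = (-1) ^ (n - k) * legendreSym p a * (p : ℤ) ^ ((k - 1) / 2) *
        (legendreSym p (-1)) ^ ((k - 1) / 2)) ∧
    (Odd k → (p : ℤ) ∣ a → Tsum p n k a = 0) ∧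
    (Even k → ¬ (p : ℤ) ∣ a →
      Tsum p n k a = (-1) ^ (n + 1 - k) * (legendreSym p (-1)) ^ (k / 2) *
        (p : ℤ) ^ ((k - 2) / 2)) ∧
    (Even k → (p : ℤ) ∣ a →
      Tsum p n k a = (-1) ^ (n - k) * ((p : ℤ) - 1) * (legendreSym p (-1)) ^ (k / 2) *
        (p : ℤ) ^ ((k - 2) / 2)) := by
  have hT : Tsum p n k a = TsumAux.T p n k ((a : ZMod p)) := rfl
  have hL : legendreSym p a = quadraticChar (ZMod p) ((a : ZMod p)) := rfl
  have hL1 : legendreSym p (-1) = quadraticChar (ZMod p) ((-1 : ZMod p)) := by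
    rw [legendreSym]; push_cast; ring_nf
  have hform := TsumAux.T_formula p hp k hk n hkn ((a : ZMod p))
  refine ⟨?_, ?_, ?_, ?_⟩
  · rintro ⟨m, hm⟩ ha
    have ha' : (a : ZMod p) ≠ 0 := fun h => ha ((ZMod.intCast_zmod_eq_zero_iff_dvd a p).mp h)
    subst hm
    rw [hT, hform, (TsumAux.S_formula p hp m).1, hL, hL1,
      show (2 * m + 1 - 1) / 2 = m from by omega, mul_pow]
    ring
  · rintro ⟨m, hm⟩ ha
    have ha' : (a : ZMod p) = 0 := (ZMod.intCast_zmod_eq_zero_iff_dvd a p).mpr ha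
    subst hm
    rw [hT, hform, (TsumAux.S_formula p hp m).1, ha']
    simp
  · rintro ⟨m, hm⟩ ha
    have ha' : (a : ZMod p) ≠ 0 := fun h => ha ((ZMod.intCast_zmod_eq_zero_iff_dvd a p).mp h)
    obtain ⟨j, rfl⟩ : ∃ j, k = 2 * j + 2 := ⟨m - 1, by omega⟩
    rw [hT, hform, (TsumAux.S_formula p hp j).2, if_neg ha', hL1,
      show (2 * j + 2) / 2 = j + 1 from by omega,
      show (2 * j + 2 - 2) / 2 = j from by omega,
      show n + 1 - (2 * j + 2) = (n - (2 * j + 2)) + 1 from by omega,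
      mul_pow, pow_succ, pow_succ]
    ring
  · rintro ⟨m, hm⟩ ha
    have ha' : (a : ZMod p) = 0 := (ZMod.intCast_zmod_eq_zero_iff_dvd a p).mpr ha
    obtain ⟨j, rfl⟩ : ∃ j, k = 2 * j + 2 := ⟨m - 1, by omega⟩
    rw [hT, hform, (TsumAux.S_formula p hp j).2, if_pos ha', hL1,
      show (2 * j + 2) / 2 = j + 1 from by omega,
      show (2 * j + 2 - 2) / 2 = j from by omega,
      mul_pow, pow_succ]
    ring
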